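/- Let X be a finitely ramified fractal. Then there exists a metric on the underlying set of X which is undistorted with respect to the cell structure if and only if there exists a constant k ∈ ℕ satisfying the following two conditions: (1) every n-cell of X contains at least two disjoint (n+k)-cells; (2) no two disjoint n-cells of X both intersect a common (n+k)-cell. -/

import Mathlib

open Set

/-- A finitely ramified cell structure on a topological space `X`: a locally finite,
level-indexed family of "cells", where each cell is compact, connected, with nonempty
interior, the unique `0`-cell is all of `X`, every `(n+1)`-cell lies in some `n`-cell,
each `n`-cell is the union of the `(n+1)`-cells it contains, two distinct cells of the
same level meet in a finite set, and every infinite descending chain of cells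
intersects in a single point. -/
structure CellStructure (X : Type*) [TopologicalSpace X] where
  cells : ℕ → Set (Set X)
  finite_cells : ∀ n, (cells n).Finite
  isCompact_cells : ∀ n, ∀ E ∈ cells n, IsCompact E
  isConnected_cells : ∀ n, ∀ E ∈ cells n, IsConnected E
  interior_nonempty : ∀ n, ∀ E ∈ cells n, (interior E).Nonempty
  root : cells 0 = {Set.univ}
  exists_parent : ∀ n, ∀ E' ∈ cells (n + 1), ∃ E ∈ cells n, E' ⊆ E
  eq_sUnion_children : ∀ n, ∀ E ∈ cells n, E = ⋃₀ {E' | E' ∈ cells (n + 1) ∧ E' ⊆ E}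
  inter_finite : ∀ n, ∀ E₁ ∈ cells n, ∀ E₂ ∈ cells n, E₁ ≠ E₂ → (E₁ ∩ E₂).Finite
  descending_singleton : ∀ E : ℕ → Set X, (∀ n, E n ∈ cells n) → (∀ n, E (n + 1) ⊆ E n) →
    ∃ p : X, (⋂ n, E n) = {p}

/-- `d` is a metric (distance function) on the set `X`. -/
def IsMetricOn {X : Type*} (d : X → X → ℝ) : Prop :=
  (∀ x y, 0 ≤ d x y) ∧ (∀ x y, d x y = 0 ↔ x = y) ∧ (∀ x y, d x y = d y x) ∧
    ∀ x y z, d x z ≤ d x y + d y z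

/-- The distance function `d` induces the given topology on `X`. -/
def InducesTopology {X : Type*} [TopologicalSpace X] (d : X → X → ℝ) : Prop :=
  ∀ s : Set X, IsOpen s ↔ ∀ x ∈ s, ∃ ε > 0, ∀ y, d x y < ε → y ∈ s

/-- The diameter of a set with respect to a distance function. -/
noncomputable def sdiam {X : Type*} (d : X → X → ℝ) (S : Set X) : ℝ :=
  sSup (Set.image2 d S S)

/-- The distance between two sets with respect to a distance function. -/
noncomputable def sdist {X : Type*} (d : X → X → ℝ) (S T : Set X) : ℝ :=
  sInf (Set.image2 d S T)

/-- The distance function `d` is `(r,R,C,δ)`-undistorted with respect to the family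
of cells `cells`: exponential decay of diameter ratios of intersecting cells, and
cell separation for disjoint cells of the same level. -/
def IsUndistortedWith {X : Type*} (cells : ℕ → Set (Set X)) (d : X → X → ℝ)
    (r R C δ : ℝ) : Prop :=
  0 < r ∧ r ≤ R ∧ R < 1 ∧ 1 ≤ C ∧ 0 < δ ∧
    (∀ m n : ℕ, m ≤ n → ∀ E ∈ cells m, ∀ E' ∈ cells n, (E ∩ E').Nonempty →
      r ^ (n - m) / C ≤ sdiam d E' / sdiam d E ∧
        sdiam d E' / sdiam d E ≤ C * R ^ (n - m)) ∧
    ∀ n : ℕ, ∀ E₁ ∈ cells n, ∀ E₂ ∈ cells n, Disjoint E₁ E₂ →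
      δ * sdiam d E₁ ≤ sdist d E₁ E₂

/-- `d` is undistorted if it is `(r,R,C,δ)`-undistorted for some constants. -/
def IsUndistorted {X : Type*} (cells : ℕ → Set (Set X)) (d : X → X → ℝ) : Prop :=
  ∃ r R C δ : ℝ, IsUndistortedWith cells d r R C δ

/-- `η` is a homeomorphism of `[0,∞)` onto itself (equivalently: a continuous,
strictly increasing surjection of `[0,∞)` onto `[0,∞)` fixing `0`). -/
def IsQSGauge (η : ℝ → ℝ) : Prop :=
  ContinuousOn η (Set.Ici 0) ∧ StrictMonoOn η (Set.Ici 0) ∧ η 0 = 0 ∧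
    Set.MapsTo η (Set.Ici 0) (Set.Ici 0) ∧ Set.SurjOn η (Set.Ici 0) (Set.Ici 0)

/-- The `η`-quasisymmetry inequality for a map `f` between sets carrying
distance functions `dX` and `dY`. -/
def QSIneq {X Y : Type*} (dX : X → X → ℝ) (dY : Y → Y → ℝ) (f : X → Y) (η : ℝ → ℝ) : Prop :=
  ∀ a b c : X, a ≠ b → a ≠ c → b ≠ c →
    dY (f a) (f b) / dY (f a) (f c) ≤ η (dX a b / dX a c)



/-! ### Auxiliary machinery -/

section Aux

open Filter in
/-- König-type lemma: a level-indexed family of finite nonempty sets in which every element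
at level `n+1` has a "parent" at level `n` admits an infinite descending chain. -/
lemma exists_descending_chain' {α : Type*} [Nonempty α] (T : ℕ → Set α)
    (hfin : ∀ n, (T n).Finite) (hne : ∀ n, (T n).Nonempty)
    (R : ℕ → α → α → Prop)
    (hpar : ∀ n a, a ∈ T (n + 1) → ∃ b ∈ T n, R n b a) :
    ∃ f : ℕ → α, (∀ n, f n ∈ T n) ∧ ∀ n, R n (f n) (f (n + 1)) := by
  classical
  -- a choice of parent
  set φ : ℕ → α → α := fun n a =>
    if h : a ∈ T (n + 1) then (hpar n a h).choose else Classical.arbitrary α with hφdef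
  have hφ : ∀ n a, a ∈ T (n + 1) → φ n a ∈ T n ∧ R n (φ n a) a := by
    intro n a h
    simp only [hφdef, dif_pos h]
    obtain ⟨h1, h2⟩ := (hpar n a h).choose_spec
    exact ⟨h1, h2⟩
  set a : ℕ → α := fun n => (hne n).some with hadef
  have ha : ∀ n, a n ∈ T n := fun n => (hne n).some_mem
  -- descend j steps from level m
  set down : ℕ → ℕ → α := fun j m => Nat.rec (a m) (fun j x => φ (m - j - 1) x) j with hdowndef
  have hdown0 : ∀ m, down 0 m = a m := fun _ => rfl
  have hdownS : ∀ j m, down (j + 1) m = φ (m - j - 1) (down j m) := fun _ _ => rfl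
  have hdownmem : ∀ j m, j ≤ m → down j m ∈ T (m - j) := by
    intro j
    induction j with
    | zero => intro m _; simpa [hdown0] using ha m
    | succ j ih =>
      intro m hjm
      have h1 : down j m ∈ T (m - j) := ih m (by omega)
      have h2 : m - j = (m - j - 1) + 1 := by omega
      rw [h2] at h1
      have := (hφ _ _ h1).1
      rw [hdownS]
      simpa [Nat.sub_sub] using this
  set b : ℕ → ℕ → α := fun n m => down (m - n) m with hbdef
  have hbmem : ∀ n m, n ≤ m → b n m ∈ T n := by
    intro n m h
    have := hdownmem (m - n) m (by omega)
    simpa [hbdef, Nat.sub_sub_self h] using this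
  have hbcompat : ∀ n m, n + 1 ≤ m → b n m = φ n (b (n + 1) m) := by
    intro n m h
    have h1 : m - n = (m - (n + 1)) + 1 := by omega
    simp only [hbdef]
    rw [h1, hdownS]
    congr 1
    omega
  -- pass to an ultrafilter refining `atTop`
  set U : Ultrafilter ℕ := Ultrafilter.of atTop with hUdef
  have hU : ∀ s ∈ (atTop : Filter ℕ), s ∈ U := fun s hs => Ultrafilter.of_le atTop hs
  have key : ∀ n, ∃ t ∈ T n, {m | n ≤ m ∧ b n m = t} ∈ U := by
    intro n
    have h1 : {m | n ≤ m} ∈ U := hU _ (mem_atTop n)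
    have h2 : (⋃ t ∈ T n, {m | n ≤ m ∧ b n m = t}) ∈ U := by
      refine Filter.mem_of_superset h1 ?_
      intro m hm
      exact mem_biUnion (hbmem n m hm) ⟨hm, rfl⟩
    rcases (Ultrafilter.finite_biUnion_mem_iff (hfin n)).mp h2 with ⟨t, ht, htU⟩
    exact ⟨t, ht, htU⟩
  choose f hfT hfU using key
  refine ⟨f, hfT, fun n => ?_⟩
  have h3 : ({m | n ≤ m ∧ b n m = f n} ∩ {m | n + 1 ≤ m ∧ b (n + 1) m = f (n + 1)}) ∈ U :=
    Filter.inter_mem (hfU n) (hfU (n + 1))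
  obtain ⟨m, ⟨hm1, hm2⟩, hm3, hm4⟩ := Ultrafilter.nonempty_of_mem h3
  have : f n = φ n (f (n + 1)) := by rw [← hm2, ← hm4, hbcompat n m hm3]
  rw [this]
  exact (hφ n (f (n + 1)) (hfT (n + 1))).2

namespace CellStructure

variable {X : Type*} [TopologicalSpace X] {CS : CellStructure X}

variable (CS) in
lemma cell_nonempty {n : ℕ} {E : Set X} (hE : E ∈ CS.cells n) : E.Nonempty := by
  obtain ⟨x, hx⟩ := CS.interior_nonempty n E hE
  exact ⟨x, interior_subset hx⟩

variable (CS) in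
lemma exists_mem_cell (x : X) : ∀ n : ℕ, ∃ E ∈ CS.cells n, x ∈ E := by
  intro n
  induction n with
  | zero => exact ⟨Set.univ, by simp [CS.root], trivial⟩
  | succ n ih =>
    obtain ⟨E, hE, hxE⟩ := ih
    have := CS.eq_sUnion_children n E hE
    rw [this] at hxE
    obtain ⟨F, ⟨hF, _⟩, hxF⟩ := hxE
    exact ⟨F, hF, hxF⟩

variable (CS) in
lemma exists_ancestor' : ∀ (j m : ℕ), ∀ E' ∈ CS.cells (m + j), ∃ E ∈ CS.cells m, E' ⊆ E := by
  intro j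
  induction j with
  | zero => intro m E' h; exact ⟨E', h, subset_rfl⟩
  | succ j ih =>
    intro m E' h
    obtain ⟨F, hF, hsub⟩ := CS.exists_parent (m + j) E' h
    obtain ⟨E, hE, hsub'⟩ := ih m F hF
    exact ⟨E, hE, hsub.trans hsub'⟩

variable (CS) in
lemma exists_ancestor {m n : ℕ} (h : m ≤ n) {E' : Set X} (hE' : E' ∈ CS.cells n) :
    ∃ E ∈ CS.cells m, E' ⊆ E := by
  obtain ⟨j, rfl⟩ := Nat.exists_eq_add_of_le h
  exact CS.exists_ancestor' j m E' hE'

variable (CS) in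
lemma exists_descendant (j : ℕ) {n : ℕ} {E : Set X} (hE : E ∈ CS.cells n) {x : X} (hx : x ∈ E) :
    ∃ F ∈ CS.cells (n + j), x ∈ F ∧ F ⊆ E := by
  induction j with
  | zero => exact ⟨E, hE, hx, subset_rfl⟩
  | succ j ih =>
    obtain ⟨F, hF, hxF, hsub⟩ := ih
    have := CS.eq_sUnion_children (n + j) F hF
    rw [this] at hxF
    obtain ⟨G, ⟨hG, hGF⟩, hxG⟩ := hxF
    exact ⟨G, hG, hxG, hGF.trans hsub⟩

variable (CS) in
/-- Two points are `n`-near if they lie in intersecting `n`-cells. -/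
def Near (n : ℕ) (x y : X) : Prop :=
  ∃ E ∈ CS.cells n, ∃ F ∈ CS.cells n, x ∈ E ∧ y ∈ F ∧ (E ∩ F).Nonempty

variable (CS) in
lemma near_zero (x y : X) : CS.Near 0 x y :=
  ⟨Set.univ, by simp [CS.root], Set.univ, by simp [CS.root], trivial, trivial, by
    simpa using ⟨x, trivial⟩⟩

lemma Near.symm {n : ℕ} {x y : X} (h : CS.Near n x y) : CS.Near n y x := by
  obtain ⟨E, hE, F, hF, hx, hy, hne⟩ := h
  exact ⟨F, hF, E, hE, hy, hx, by rwa [Set.inter_comm]⟩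

lemma Near.mono {m n : ℕ} (hmn : m ≤ n) {x y : X} (h : CS.Near n x y) : CS.Near m x y := by
  induction n with
  | zero => simpa [Nat.le_zero.mp hmn] using h
  | succ n ih =>
    rcases Nat.lt_or_ge m (n+1) with hlt | hge
    · apply ih (by omega)
      obtain ⟨E, hE, F, hF, hx, hy, hne⟩ := h
      obtain ⟨E', hE', hEs⟩ := CS.exists_parent n E hE
      obtain ⟨F', hF', hFs⟩ := CS.exists_parent n F hF
      exact ⟨E', hE', F', hF', hEs hx, hFs hy, hne.mono (Set.inter_subset_inter hEs hFs)⟩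
    · have : m = n + 1 := by omega
      rwa [this]

variable (CS) in
lemma near_of_mem_cell {n : ℕ} {E : Set X} (hE : E ∈ CS.cells n) {x y : X}
    (hx : x ∈ E) (hy : y ∈ E) : CS.Near n x y :=
  ⟨E, hE, E, hE, hx, hy, ⟨x, hx, hx⟩⟩

variable (CS) in
/-- If two points are `n`-near for every `n`, they are equal. -/
lemma eq_of_near_all [TopologicalSpace.MetrizableSpace X] {x y : X}
    (h : ∀ n, CS.Near n x y) : x = y := by
  classical
  set T : ℕ → Set (Set X × Set X) := fun n =>
    {p | p.1 ∈ CS.cells n ∧ p.2 ∈ CS.cells n ∧ x ∈ p.1 ∧ y ∈ p.2 ∧ (p.1 ∩ p.2).Nonempty}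
    with hTdef
  have hfin : ∀ n, (T n).Finite := by
    intro n
    apply Set.Finite.subset (((CS.finite_cells n).prod (CS.finite_cells n)))
    rintro ⟨E, F⟩ ⟨h1, h2, _⟩
    exact ⟨h1, h2⟩
  have hne : ∀ n, (T n).Nonempty := by
    intro n
    obtain ⟨E, hE, F, hF, hx, hy, hint⟩ := h n
    exact ⟨⟨E, F⟩, hE, hF, hx, hy, hint⟩
  obtain ⟨f, hfT, hfR⟩ := exists_descending_chain' T hfin hne
    (fun _ b a => a.1 ⊆ b.1 ∧ a.2 ⊆ b.2)
    (by
      rintro n ⟨E, F⟩ ⟨h1, h2, hx, hy, hint⟩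
      obtain ⟨E', hE', hEs⟩ := CS.exists_parent n E h1
      obtain ⟨F', hF', hFs⟩ := CS.exists_parent n F h2
      exact ⟨⟨E', F'⟩, ⟨hE', hF', hEs hx, hFs hy,
        hint.mono (Set.inter_subset_inter hEs hFs)⟩, hEs, hFs⟩)
  obtain ⟨p, hp⟩ := CS.descending_singleton (fun n => (f n).1)
    (fun n => (hfT n).1) (fun n => (hfR n).1)
  obtain ⟨q, hq⟩ := CS.descending_singleton (fun n => (f n).2)
    (fun n => (hfT n).2.1) (fun n => (hfR n).2)
  have hxp : x = p := by
    have : x ∈ ⋂ n, (f n).1 := Set.mem_iInter.mpr fun n => (hfT n).2.2.1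
    rwa [hp, Set.mem_singleton_iff] at this
  have hyq : y = q := by
    have : y ∈ ⋂ n, (f n).2 := Set.mem_iInter.mpr fun n => (hfT n).2.2.2.1
    rwa [hq, Set.mem_singleton_iff] at this
  set V : ℕ → Set X := fun n => (f n).1 ∩ (f n).2 with hVdef
  have hVc : ∀ n, IsCompact (V n) := fun n =>
    ((CS.isCompact_cells n _ (hfT n).1).inter_right
      (CS.isCompact_cells n _ (hfT n).2.1).isClosed)
  have hVne : (⋂ n, V n).Nonempty := by
    apply IsCompact.nonempty_iInter_of_sequence_nonempty_isCompact_isClosed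
    · exact fun n => Set.inter_subset_inter (hfR n).1 (hfR n).2
    · exact fun n => (hfT n).2.2.2.2
    · exact hVc 0
    · exact fun n => (hVc n).isClosed
  obtain ⟨z, hz⟩ := hVne
  have hz1 : z ∈ ⋂ n, (f n).1 := Set.mem_iInter.mpr fun n =>
    ((Set.mem_iInter.mp hz n).1)
  have hz2 : z ∈ ⋂ n, (f n).2 := Set.mem_iInter.mpr fun n =>
    ((Set.mem_iInter.mp hz n).2)
  rw [hp, Set.mem_singleton_iff] at hz1
  rw [hq, Set.mem_singleton_iff] at hz2
  rw [hxp, hyq, ← hz1, ← hz2]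

end CellStructure

open CellStructure

section Conditions

variable {X : Type*} [TopologicalSpace X] {CS : CellStructure X} {k : ℕ}

/-- Condition (1) of the theorem. -/
def Cond1 (CS : CellStructure X) (k : ℕ) : Prop :=
  ∀ n : ℕ, ∀ E ∈ CS.cells n, ∃ E₁ ∈ CS.cells (n + k), ∃ E₂ ∈ CS.cells (n + k),
    E₁ ⊆ E ∧ E₂ ⊆ E ∧ E₁ ≠ E₂ ∧ Disjoint E₁ E₂

/-- Condition (2) of the theorem. -/
def Cond2 (CS : CellStructure X) (k : ℕ) : Prop :=
  ∀ n : ℕ, ∀ E₁ ∈ CS.cells n, ∀ E₂ ∈ CS.cells n, Disjoint E₁ E₂ →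
    ∀ F ∈ CS.cells (n + k), ¬((E₁ ∩ F).Nonempty ∧ (E₂ ∩ F).Nonempty)

/-- If two `ℓ`-cells both meet a common `(ℓ+k)`-cell, they intersect. -/
lemma Cond2.link (h2 : Cond2 CS k) {ℓ : ℕ} {P Q F : Set X}
    (hP : P ∈ CS.cells ℓ) (hQ : Q ∈ CS.cells ℓ) (hF : F ∈ CS.cells (ℓ + k))
    (hPF : (P ∩ F).Nonempty) (hQF : (Q ∩ F).Nonempty) : (P ∩ Q).Nonempty := by
  by_contra hPQ
  have hd : Disjoint P Q := Set.disjoint_iff_inter_eq_empty.mpr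
    (Set.not_nonempty_iff_eq_empty.mp hPQ)
  exact h2 ℓ P hP Q hQ hd F hF ⟨hPF, hQF⟩

/-- Separation: points of disjoint `n`-cells are not `(n+k+k)`-near. -/
lemma Cond2.sep (h2 : Cond2 CS k) {n : ℕ} {E₁ E₂ : Set X}
    (hE₁ : E₁ ∈ CS.cells n) (hE₂ : E₂ ∈ CS.cells n) (hd : Disjoint E₁ E₂)
    {x y : X} (hx : x ∈ E₁) (hy : y ∈ E₂) : ¬ CS.Near (n + k + k) x y := by
  rintro ⟨G, hG, H, hH, hxG, hyH, hGH⟩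
  obtain ⟨G₁, hG₁, hGG₁⟩ := CS.exists_ancestor (Nat.le_add_right (n + k) k) hG
  obtain ⟨Y₁, hY₁, hyY₁, hY₁E₂⟩ := CS.exists_descendant k hE₂ hy
  have hYG : (Y₁ ∩ G₁).Nonempty :=
    h2.link hY₁ hG₁ hH ⟨y, hyY₁, hyH⟩ (hGH.mono (Set.inter_subset_inter hGG₁ subset_rfl))
  exact h2 n E₁ hE₁ E₂ hE₂ hd G₁ hG₁ ⟨⟨x, hx, hGG₁ hxG⟩, hYG.mono
    (Set.inter_subset_inter hY₁E₂ subset_rfl)⟩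

/-- Two near-links at level `n+2k` collapse to one at level `n`. -/
lemma Cond2.collapse2 (h2 : Cond2 CS k) {n : ℕ} {x y z : X}
    (hxy : CS.Near (n + k + k) x y) (hyz : CS.Near (n + k + k) y z) :
    CS.Near n x z := by
  obtain ⟨A₁, hA₁, A₂, hA₂, hxA, hyA, hAA⟩ := hxy
  obtain ⟨B₁, hB₁, B₂, hB₂, hyB, hzB, hBB⟩ := hyz
  obtain ⟨P, hP, hsP⟩ := CS.exists_ancestor (Nat.le_add_right (n+k) k) hA₁
  obtain ⟨Q, hQ, hsQ⟩ := CS.exists_ancestor (Nat.le_add_right (n+k) k) hB₁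
  obtain ⟨W, hW, hsW⟩ := CS.exists_ancestor (Nat.le_add_right (n+k) k) hB₂
  have hPQ : (P ∩ Q).Nonempty :=
    h2.link hP hQ hA₂ (hAA.mono (Set.inter_subset_inter hsP subset_rfl))
      ⟨y, hsQ hyB, hyA⟩
  have hQW : (Q ∩ W).Nonempty := hBB.mono (Set.inter_subset_inter hsQ hsW)
  obtain ⟨H₁, hH₁, hsH₁⟩ := CS.exists_ancestor (Nat.le_add_right n k) hP
  obtain ⟨H₂, hH₂, hsH₂⟩ := CS.exists_ancestor (Nat.le_add_right n k) hW
  have hHH : (H₁ ∩ H₂).Nonempty :=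
    h2.link hH₁ hH₂ hQ (hPQ.mono (Set.inter_subset_inter hsH₁ subset_rfl))
      ((hQW.mono (Set.inter_subset_inter subset_rfl hsH₂)).imp fun w hw => ⟨hw.2, hw.1⟩)
  exact ⟨H₁, hH₁, H₂, hH₂, hsH₁ (hsP hxA), hsH₂ (hsW hzB), hHH⟩

/-- Four-point collapse: three `near`-links at level `n+3k` give one at level `n`. -/
lemma Cond2.collapse4 (h2 : Cond2 CS k) {n : ℕ} {x₁ x₂ x₃ x₄ : X}
    (h12 : CS.Near (n + k + k + k) x₁ x₂) (h23 : CS.Near (n + k + k + k) x₂ x₃)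
    (h34 : CS.Near (n + k + k + k) x₃ x₄) : CS.Near n x₁ x₄ := by
  obtain ⟨A₁, hA₁, A₂, hA₂, hx₁A, hx₂A, hAA⟩ := h12
  obtain ⟨B₁, hB₁, B₂, hB₂, hx₂B, hx₃B, hBB⟩ := h23
  obtain ⟨C₁, hC₁, C₂, hC₂, hx₃C, hx₄C, hCC⟩ := h34
  -- step to level n+k+k
  obtain ⟨D₁, hD₁, hsD₁⟩ := CS.exists_ancestor (Nat.le_add_right (n+k+k) k) hA₁
  obtain ⟨D₂, hD₂, hsD₂⟩ := CS.exists_ancestor (Nat.le_add_right (n+k+k) k) hA₂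
  obtain ⟨D₃, hD₃, hsD₃⟩ := CS.exists_ancestor (Nat.le_add_right (n+k+k) k) hB₂
  obtain ⟨D₄, hD₄, hsD₄⟩ := CS.exists_ancestor (Nat.le_add_right (n+k+k) k) hC₂
  have hD12 : (D₁ ∩ D₂).Nonempty := hAA.mono (Set.inter_subset_inter hsD₁ hsD₂)
  have hD23 : (D₂ ∩ D₃).Nonempty :=
    h2.link hD₂ hD₃ hB₁ ⟨x₂, hsD₂ hx₂A, hx₂B⟩
      ((hBB.mono (Set.inter_subset_inter subset_rfl hsD₃)).imp
        (fun z hz => ⟨hz.2, hz.1⟩))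
  have hD34 : (D₃ ∩ D₄).Nonempty :=
    h2.link hD₃ hD₄ hC₁ ⟨x₃, hsD₃ hx₃B, hx₃C⟩
      ((hCC.mono (Set.inter_subset_inter subset_rfl hsD₄)).imp
        (fun z hz => ⟨hz.2, hz.1⟩))
  -- step to level n+k
  obtain ⟨G₁, hG₁, hsG₁⟩ := CS.exists_ancestor (Nat.le_add_right (n+k) k) hD₁
  obtain ⟨G₂, hG₂, hsG₂⟩ := CS.exists_ancestor (Nat.le_add_right (n+k) k) hD₂
  obtain ⟨G₃, hG₃, hsG₃⟩ := CS.exists_ancestor (Nat.le_add_right (n+k) k) hD₄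
  have hG12 : (G₁ ∩ G₂).Nonempty := hD12.mono (Set.inter_subset_inter hsG₁ hsG₂)
  have hG23 : (G₂ ∩ G₃).Nonempty :=
    h2.link hG₂ hG₃ hD₃ (hD23.mono (Set.inter_subset_inter hsG₂ subset_rfl))
      ((hD34.mono (Set.inter_subset_inter subset_rfl hsG₃)).imp
        (fun z hz => ⟨hz.2, hz.1⟩))
  -- step to level n
  obtain ⟨H₁, hH₁, hsH₁⟩ := CS.exists_ancestor (Nat.le_add_right n k) hG₁
  obtain ⟨H₂, hH₂, hsH₂⟩ := CS.exists_ancestor (Nat.le_add_right n k) hG₃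
  have hH12 : (H₁ ∩ H₂).Nonempty :=
    h2.link hH₁ hH₂ hG₂ (hG12.mono (Set.inter_subset_inter hsH₁ subset_rfl))
      ((hG23.mono (Set.inter_subset_inter subset_rfl hsH₂)).imp
        (fun z hz => ⟨hz.2, hz.1⟩))
  exact ⟨H₁, hH₁, H₂, hH₂, hsH₁ (hsG₁ (hsD₁ hx₁A)), hsH₂ (hsG₃ (hsD₄ hx₄C)), hH12⟩

lemma Cond2.collapse4' (h2 : Cond2 CS k) {n : ℕ} {x₁ x₂ x₃ x₄ : X}
    (h12 : x₁ = x₂ ∨ CS.Near (n + k + k + k) x₁ x₂)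
    (h23 : x₂ = x₃ ∨ CS.Near (n + k + k + k) x₂ x₃)
    (h34 : x₃ = x₄ ∨ CS.Near (n + k + k + k) x₃ x₄) :
    x₁ = x₄ ∨ CS.Near n x₁ x₄ := by
  have hmono : ∀ {u v : X}, CS.Near (n + k + k + k) u v → CS.Near n u v :=
    fun h => h.mono (show n ≤ n+k+k+k by omega)
  have hcol2 : ∀ {u v w : X}, CS.Near (n + k + k + k) u v →
      CS.Near (n + k + k + k) v w → CS.Near n u w := by
    intro u v w huv hvw
    have huv' : CS.Near (n + k + k) u v := huv.mono (show n+k+k ≤ n+k+k+k by omega)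
    have hvw' : CS.Near (n + k + k) v w := hvw.mono (show n+k+k ≤ n+k+k+k by omega)
    exact (h2.collapse2 huv' hvw' : CS.Near n u w).mono le_rfl
  rcases h12 with rfl | h12
  · rcases h23 with rfl | h23
    · rcases h34 with rfl | h34
      · exact Or.inl rfl
      · exact Or.inr (hmono h34)
    · rcases h34 with rfl | h34
      · exact Or.inr (hmono h23)
      · exact Or.inr (hcol2 h23 h34)
  · rcases h23 with rfl | h23
    · rcases h34 with rfl | h34
      · exact Or.inr (hmono h12)
      · exact Or.inr (hcol2 h12 h34)
    · rcases h34 with rfl | h34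
      · exact Or.inr (hcol2 h12 h23)
      · exact Or.inr (h2.collapse4 h12 h23 h34)

lemma cond1_succ (h1 : Cond1 CS k) : Cond1 CS (k + 1) := by
  intro n E hE
  obtain ⟨E₁, hE₁, E₂, hE₂, hs₁, hs₂, hne, hdisj⟩ := h1 n E hE
  obtain ⟨x, hx⟩ := CS.cell_nonempty hE₁
  obtain ⟨y, hy⟩ := CS.cell_nonempty hE₂
  rw [CS.eq_sUnion_children (n+k) E₁ hE₁] at hx
  rw [CS.eq_sUnion_children (n+k) E₂ hE₂] at hy
  obtain ⟨F₁, ⟨hF₁, hF₁s⟩, hxF₁⟩ := hx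
  obtain ⟨F₂, ⟨hF₂, hF₂s⟩, hyF₂⟩ := hy
  have hdisj' : Disjoint F₁ F₂ := hdisj.mono hF₁s hF₂s
  refine ⟨F₁, hF₁, F₂, hF₂, hF₁s.trans hs₁, hF₂s.trans hs₂, ?_, hdisj'⟩
  intro hc
  exact Set.disjoint_left.mp hdisj' hxF₁ (hc ▸ hxF₁)

lemma cond2_succ (h2 : Cond2 CS k) : Cond2 CS (k + 1) := by
  intro n E₁ hE₁ E₂ hE₂ hdisj F hF
  rintro ⟨hne1, hne2⟩
  obtain ⟨F', hF', hsF⟩ := CS.exists_parent (n + k) F hF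
  exact h2 n E₁ hE₁ E₂ hE₂ hdisj F' hF'
    ⟨hne1.mono (Set.inter_subset_inter subset_rfl hsF),
     hne2.mono (Set.inter_subset_inter subset_rfl hsF)⟩

end Conditions

open CellStructure NNReal in
lemma backward_main {X : Type*} [TopologicalSpace X] [TopologicalSpace.MetrizableSpace X]
    (CS : CellStructure X) (k : ℕ) (hk : 1 ≤ k)
    (h1 : Cond1 CS k) (h2 : Cond2 CS k) :
    ∃ d : X → X → ℝ, IsMetricOn d ∧ IsUndistorted CS.cells d := by
  classical
  -- the level function
  set S : X → X → Set ℕ := fun x y => {m | CS.Near m x y} with hSdef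
  have hSne : ∀ x y, (S x y).Nonempty := fun x y => ⟨0, CS.near_zero x y⟩
  have hSbdd : ∀ x y, x ≠ y → BddAbove (S x y) := by
    intro x y hxy
    by_contra hb
    refine hxy (CS.eq_of_near_all fun n => ?_)
    obtain ⟨m, hm, hnm⟩ := not_bddAbove_iff.mp hb n
    exact Near.mono hnm.le hm
  set N : X → X → ℕ := fun x y => sSup (S x y) with hNdef
  have hNmem : ∀ x y, x ≠ y → CS.Near (N x y) x y :=
    fun x y h => Nat.sSup_mem (hSne x y) (hSbdd x y h)
  have hNge : ∀ {x y : X} {m : ℕ}, x ≠ y → CS.Near m x y → m ≤ N x y :=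
    fun h hm => le_csSup (hSbdd _ _ h) hm
  have hNle : ∀ {x y : X} {m : ℕ}, x ≠ y → ¬ CS.Near m x y → N x y ≤ m := by
    intro x y m h hm
    by_contra hc
    exact hm ((hNmem x y h).mono (by omega))
  have hNsymm : ∀ x y, N x y = N y x := by
    intro x y
    simp only [hNdef]
    congr 1
    ext m
    exact ⟨fun h => Near.symm h, fun h => Near.symm h⟩
  -- the base
  set K : ℕ := k + k + k with hKdef
  have hKne : (K : ℝ) ≠ 0 := Nat.cast_ne_zero.mpr (by omega)
  set b : ℝ≥0 := (1/2 : ℝ≥0) ^ ((K : ℝ)⁻¹) with hbdef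
  have hbK : b ^ K = 1/2 := by
    rw [hbdef, ← NNReal.rpow_natCast (((1:ℝ≥0)/2) ^ ((K : ℝ)⁻¹)) K, ← NNReal.rpow_mul,
      inv_mul_cancel₀ hKne, NNReal.rpow_one]
  have hb0 : 0 < b := NNReal.rpow_pos (by norm_num)
  have hb1 : b < 1 := by
    by_contra hc
    push_neg at hc
    have := one_le_pow₀ hc (n := K)
    rw [hbK] at this
    have h' : ((1:ℝ≥0):ℝ) ≤ ((1/2 : ℝ≥0) : ℝ) := by exact_mod_cast this
    norm_num at h'
  have hble : b ≤ 1 := hb1.le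
  have hmono : ∀ {m m' : ℕ}, m ≤ m' → b ^ m' ≤ b ^ m :=
    fun h => pow_le_pow_of_le_one (zero_le : (0:ℝ≥0) ≤ b) hble h
  -- the quasimetric
  set ρ : X → X → ℝ≥0 := fun u v => if u = v then 0 else b ^ (N u v) with hρdef
  have hρself : ∀ u, ρ u u = 0 := fun u => by simp [hρdef]
  have hρcomm : ∀ u v, ρ u v = ρ v u := by
    intro u v
    simp only [hρdef, hNsymm u v]
    by_cases h : u = v
    · simp [h]
    · rw [if_neg h, if_neg (Ne.symm h)]
  have hρzero : ∀ {u v : X}, ρ u v = 0 → u = v := by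
    intro u v h
    by_contra hc
    rw [hρdef] at h
    simp only [if_neg hc] at h
    exact (pow_pos hb0 (N u v)).ne' h
  have hρB : ∀ {m : ℕ} {u v : X}, (u = v ∨ CS.Near m u v) → ρ u v ≤ b ^ m := by
    intro m u v h
    by_cases hc : u = v
    · simp [hρdef, hc]
    · rcases h with rfl | h
      · exact absurd rfl hc
      · simp only [hρdef, if_neg hc]
        exact hmono (hNge hc h)
  have hρA : ∀ {m : ℕ} {u v : X}, ρ u v ≤ b ^ m → (u = v ∨ CS.Near m u v) := by
    intro m u v h
    by_cases hc : u = v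
    · exact Or.inl hc
    · simp only [hρdef, if_neg hc] at h
      have hmN : m ≤ N u v := by
        by_contra hc'
        exact absurd h (not_le.mpr (pow_lt_pow_right_of_lt_one₀ hb0 hb1 (by omega)))
      exact Or.inr ((hNmem u v hc).mono hmN)
  -- the four-point inequality
  have hd4 : ∀ x₁ x₂ x₃ x₄ : X, ρ x₁ x₄ ≤ 2 * max (ρ x₁ x₂) (max (ρ x₂ x₃) (ρ x₃ x₄)) := by
    intro x₁ x₂ x₃ x₄
    by_cases h14 : x₁ = x₄
    · simp [hρdef, h14]
    set M := max (ρ x₁ x₂) (max (ρ x₂ x₃) (ρ x₃ x₄)) with hM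
    have hle12 : ρ x₁ x₂ ≤ M := le_max_left _ _
    have hle23 : ρ x₂ x₃ ≤ M := le_trans (le_max_left _ _) (le_max_right _ _)
    have hle34 : ρ x₃ x₄ ≤ M := le_trans (le_max_right _ _) (le_max_right _ _)
    by_cases hM0 : M = 0
    · exfalso
      apply h14
      have e12 := hρzero (le_antisymm (hM0 ▸ hle12) zero_le)
      have e23 := hρzero (le_antisymm (hM0 ▸ hle23) zero_le)
      have e34 := hρzero (le_antisymm (hM0 ▸ hle34) zero_le)
      rw [e12, e23, e34]
    -- M equals b ^ m for some m
    have hMval : ∃ m : ℕ, M = b ^ m := by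
      have h3 : M = ρ x₁ x₂ ∨ M = ρ x₂ x₃ ∨ M = ρ x₃ x₄ := by
        rcases max_choice (ρ x₁ x₂) (max (ρ x₂ x₃) (ρ x₃ x₄)) with h | h
        · exact Or.inl h
        · rcases max_choice (ρ x₂ x₃) (ρ x₃ x₄) with h' | h'
          · exact Or.inr (Or.inl (h.trans h'))
          · exact Or.inr (Or.inr (h.trans h'))
      have hval : ∀ u v : X, M = ρ u v → ∃ m : ℕ, M = b ^ m := by
        intro u v he
        have huv : u ≠ v := fun hc => hM0 (he.trans (by simp [hρdef, hc]))
        exact ⟨N u v, by rw [he]; simp [hρdef, if_neg huv]⟩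
      rcases h3 with h | h | h
      exacts [hval _ _ h, hval _ _ h, hval _ _ h]
    obtain ⟨m, hm⟩ := hMval
    have h12 := hρA (hm ▸ hle12)
    have h23 := hρA (hm ▸ hle23)
    have h34 := hρA (hm ▸ hle34)
    by_cases hmK : K ≤ m
    · have harith : (m - K) + k + k + k = m := by omega
      have h12' : x₁ = x₂ ∨ CS.Near (m - K + k + k + k) x₁ x₂ := by rw [harith]; exact h12
      have h23' : x₂ = x₃ ∨ CS.Near (m - K + k + k + k) x₂ x₃ := by rw [harith]; exact h23
      have h34' : x₃ = x₄ ∨ CS.Near (m - K + k + k + k) x₃ x₄ := by rw [harith]; exact h34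
      have hcol : x₁ = x₄ ∨ CS.Near (m - K) x₁ x₄ := h2.collapse4' h12' h23' h34'
      rcases hcol with hc | hc
      · exact absurd hc h14
      · have : ρ x₁ x₄ ≤ b ^ (m - K) := hρB (Or.inr hc)
        have hbmK : b ^ (m - K) = 2 * b ^ m := by
          have : b ^ (m - K) * b ^ K = b ^ m := by
            rw [← pow_add]
            congr 1
            omega
          rw [hbK] at this
          have h2ne : (2 : ℝ≥0) ≠ 0 := by norm_num
          field_simp at this
          rw [this, mul_comm]
        rw [hm, ← hbmK]
        exact this
    · have hρ1 : ρ x₁ x₄ ≤ 1 := by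
        simp only [hρdef, if_neg h14]
        exact pow_le_one₀ (zero_le : (0:ℝ≥0) ≤ b) hble
      have : (1 : ℝ≥0) ≤ 2 * b ^ m := by
        have : b ^ K ≤ b ^ m := hmono (by omega)
        rw [hbK] at this
        calc (1:ℝ≥0) = 2 * (1/2) := by norm_num
        _ ≤ 2 * b ^ m := by exact mul_le_mul_right this 2
      rw [hm]
      exact hρ1.trans this
  -- the metric
  set d : X → X → ℝ := fun x y =>
    @dist X (@PseudoMetricSpace.toDist X (PseudoMetricSpace.ofPreNNDist ρ hρself hρcomm)) x y
    with hddef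
  have hdle : ∀ x y, d x y ≤ (ρ x y : ℝ) :=
    fun x y => PseudoMetricSpace.dist_ofPreNNDist_le ρ hρself hρcomm x y
  have hdge : ∀ x y, (ρ x y : ℝ) ≤ 2 * d x y :=
    fun x y => PseudoMetricSpace.le_two_mul_dist_ofPreNNDist ρ hρself hρcomm hd4 x y
  have hdnonneg : ∀ x y, 0 ≤ d x y :=
    fun x y => @dist_nonneg X (PseudoMetricSpace.ofPreNNDist ρ hρself hρcomm) x y
  have hdcomm : ∀ x y, d x y = d y x :=
    fun x y => @dist_comm X (PseudoMetricSpace.ofPreNNDist ρ hρself hρcomm) x y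
  have hdtri : ∀ x y z, d x z ≤ d x y + d y z :=
    fun x y z => @dist_triangle X (PseudoMetricSpace.ofPreNNDist ρ hρself hρcomm) x y z
  have hdself : ∀ x, d x x = 0 :=
    fun x => @dist_self X (PseudoMetricSpace.ofPreNNDist ρ hρself hρcomm) x
  have hdzero : ∀ {x y : X}, d x y = 0 → x = y := by
    intro x y h
    apply hρzero
    have := hdge x y
    rw [h, mul_zero] at this
    exact_mod_cast le_antisymm (by exact_mod_cast this) zero_le
  have hmet : IsMetricOn d := by
    refine ⟨hdnonneg, fun x y => ⟨fun h => hdzero h, fun h => h ▸ hdself x⟩, hdcomm, hdtri⟩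
  -- diameter and distance bounds
  set β : ℝ := (b : ℝ) with hβdef
  have hβ0 : 0 < β := hb0
  have hβ1 : β < 1 := hb1
  have hβpow : ∀ j : ℕ, ((b ^ j : ℝ≥0) : ℝ) = β ^ j := fun j => by push_cast; rfl
  -- upper bound for diameters
  have hub : ∀ n : ℕ, ∀ E ∈ CS.cells n, ∀ x ∈ E, ∀ y ∈ E, d x y ≤ β ^ n := by
    intro n E hE x hx y hy
    refine (hdle x y).trans ?_
    rw [← hβpow]
    exact_mod_cast hρB (Or.inr (CS.near_of_mem_cell hE hx hy))
  have hbddAbove : ∀ n : ℕ, ∀ E ∈ CS.cells n, BddAbove (Set.image2 d E E) := by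
    intro n E hE
    refine ⟨β ^ n, ?_⟩
    rintro z ⟨x, hx, y, hy, rfl⟩
    exact hub n E hE x hx y hy
  have hsdiam_ub : ∀ n : ℕ, ∀ E ∈ CS.cells n, sdiam d E ≤ β ^ n := by
    intro n E hE
    apply csSup_le
    · obtain ⟨x, hx⟩ := CS.cell_nonempty hE
      exact ⟨d x x, x, hx, x, hx, rfl⟩
    · rintro z ⟨x, hx, y, hy, rfl⟩
      exact hub n E hE x hx y hy
  -- lower bound for distances between points of disjoint cells, one level up
  have hlbpt : ∀ n : ℕ, ∀ E₁ ∈ CS.cells n, ∀ E₂ ∈ CS.cells n, Disjoint E₁ E₂ →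
      ∀ x ∈ E₁, ∀ y ∈ E₂, β ^ n / 4 ≤ d x y := by
    intro n E₁ hE₁ E₂ hE₂ hdisj x hx y hy
    have hxy : x ≠ y := fun hc => Set.disjoint_left.mp hdisj hx (hc ▸ hy)
    have hnear : ¬ CS.Near (n + k + k) x y := h2.sep hE₁ hE₂ hdisj hx hy
    have hNb : N x y ≤ n + K := by
      refine (hNle hxy hnear).trans ?_
      omega
    have hρlb : (b : ℝ≥0) ^ (n + K) ≤ ρ x y := by
      simp only [hρdef, if_neg hxy]
      exact hmono hNb
    have hval : ((b : ℝ≥0) ^ (n + K) : ℝ≥0) = (b ^ n) * (1/2) := by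
      rw [pow_add, hbK]
    have : (β ^ n) * (1/2) ≤ (ρ x y : ℝ) := by
      rw [← hβpow]
      exact_mod_cast hval ▸ hρlb
    have h2d := hdge x y
    nlinarith [this, h2d]
  -- lower bound for diameters
  have hsdiam_lb : ∀ n : ℕ, ∀ E ∈ CS.cells n, β ^ n / 8 ≤ sdiam d E := by
    intro n E hE
    obtain ⟨E₁, hE₁, E₂, hE₂, hs₁, hs₂, hne12, hdisj⟩ := h1 n E hE
    obtain ⟨x, hx⟩ := CS.cell_nonempty hE₁
    obtain ⟨y, hy⟩ := CS.cell_nonempty hE₂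
    have hd1 : β ^ (n + k) / 4 ≤ d x y := hlbpt (n + k) E₁ hE₁ E₂ hE₂ hdisj x hx y hy
    have hcub : β ^ k * β ^ k ≥ (1/2 : ℝ) * (1/2) := by
      have h3 : β ^ K = 1/2 := by
        rw [hβdef, ← hβpow, hbK]
        norm_num
      have hkk : β ^ k * (β ^ k * β ^ k) = 1/2 := by
        rw [← pow_add, ← pow_add]
        rw [show k + (k + k) = K by omega, h3]
      nlinarith [pow_pos hβ0 k, pow_le_one₀ hβ0.le hβ1.le (n := k)]
    have hd2 : β ^ n / 8 ≤ d x y := by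
      have hpow : β ^ (n + k) = β ^ n * β ^ k := pow_add β n k
      have hklb : (1/2 : ℝ) ≤ β ^ k := by
        nlinarith [pow_pos hβ0 k, pow_le_one₀ hβ0.le hβ1.le (n := k), hcub]
      calc β ^ n / 8 = (β ^ n * (1/2)) / 4 := by ring
      _ ≤ β ^ (n + k) / 4 := by
          rw [hpow]
          have := pow_pos hβ0 n
          nlinarith [hklb]
      _ ≤ d x y := hd1
    refine hd2.trans (le_csSup (hbddAbove n E hE) ?_)
    exact ⟨x, hs₁ hx, y, hs₂ hy, rfl⟩
  have hsdiam_pos : ∀ n : ℕ, ∀ E ∈ CS.cells n, 0 < sdiam d E := by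
    intro n E hE
    exact lt_of_lt_of_le (by positivity) (hsdiam_lb n E hE)
  -- assemble
  refine ⟨d, hmet, β, β, 8, 1/4, hβ0, le_rfl, hβ1, by norm_num, by norm_num, ?_, ?_⟩
  · -- decay
    intro m n hmn E hE E' hE' _
    have h1' := hsdiam_lb m E hE
    have h2' := hsdiam_ub m E hE
    have h3' := hsdiam_lb n E' hE'
    have h4' := hsdiam_ub n E' hE'
    have h5' := hsdiam_pos m E hE
    have hβn : β ^ m * β ^ (n - m) = β ^ n := by
      rw [← pow_add]
      congr 1
      omega
    have hpm := pow_pos hβ0 m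
    have hpn := pow_pos hβ0 n
    have hpnm := pow_pos hβ0 (n - m)
    constructor
    · rw [div_le_div_iff₀ (by norm_num) h5']
      nlinarith [h3', h2', hpnm, hpm]
    · rw [div_le_iff₀ h5']
      nlinarith [h4', h1', hpnm, hpm]
  · -- separation
    intro n E₁ hE₁ E₂ hE₂ hdisj
    have hsd : β ^ n / 4 ≤ sdist d E₁ E₂ := by
      apply le_csInf
      · obtain ⟨x, hx⟩ := CS.cell_nonempty hE₁
        obtain ⟨y, hy⟩ := CS.cell_nonempty hE₂
        exact ⟨d x y, x, hx, y, hy, rfl⟩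
      · rintro z ⟨x, hx, y, hy, rfl⟩
        exact hlbpt n E₁ hE₁ E₂ hE₂ hdisj x hx y hy
    have := hsdiam_ub n E₁ hE₁
    nlinarith [this, hsd]

lemma forward_main {X : Type*} [TopologicalSpace X]
    (CS : CellStructure X) (d : X → X → ℝ) (hmet : IsMetricOn d)
    {r R C δ : ℝ} (hund : IsUndistortedWith CS.cells d r R C δ) :
    ∃ k : ℕ,
      (∀ n : ℕ, ∀ E ∈ CS.cells n, ∃ E₁ ∈ CS.cells (n + k), ∃ E₂ ∈ CS.cells (n + k),
        E₁ ⊆ E ∧ E₂ ⊆ E ∧ E₁ ≠ E₂ ∧ Disjoint E₁ E₂) ∧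
      (∀ n : ℕ, ∀ E₁ ∈ CS.cells n, ∀ E₂ ∈ CS.cells n, Disjoint E₁ E₂ →
        ∀ F ∈ CS.cells (n + k), ¬((E₁ ∩ F).Nonempty ∧ (E₂ ∩ F).Nonempty)) := by
  obtain ⟨hr, hrR, hR1, hC, hδ, hdecay, hsep⟩ := hund
  obtain ⟨hd0, hdeq, hdcomm, hdtri⟩ := hmet
  have hC0 : (0:ℝ) < C := lt_of_lt_of_le one_pos hC
  -- every cell has positive diameter and bounded image2
  have hcells : ∀ n : ℕ, ∀ E ∈ CS.cells n, 0 < sdiam d E ∧ BddAbove (Set.image2 d E E) := by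
    intro n E hE
    obtain ⟨x, hx⟩ := CS.cell_nonempty hE
    have hne2 : (E ∩ E).Nonempty := ⟨x, hx, hx⟩
    have h := (hdecay n n le_rfl E hE E hE hne2).1
    rw [Nat.sub_self, pow_zero] at h
    have hnz : sdiam d E ≠ 0 := by
      intro hz
      rw [hz, div_zero] at h
      have : (0:ℝ) < 1 / C := by positivity
      linarith
    have hbdd : BddAbove (Set.image2 d E E) := by
      by_contra hb
      exact hnz (Real.sSup_of_not_bddAbove hb)
    have hge : 0 ≤ sdiam d E := by
      have : d x x ∈ Set.image2 d E E := ⟨x, hx, x, hx, rfl⟩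
      have h0 : d x x = 0 := (hdeq x x).mpr rfl
      have h2 := le_csSup hbdd this
      rw [h0] at h2
      exact h2
    exact ⟨lt_of_le_of_ne hge (Ne.symm hnz), hbdd⟩
  -- choose k with C * R ^ k < min δ (1/4)
  have hRk : ∃ k : ℕ, C * R ^ k < min δ (1/4) := by
    have hR0 : 0 ≤ R := le_trans hr.le hrR
    have htend := tendsto_pow_atTop_nhds_zero_of_lt_one hR0 hR1
    have hpos : (0:ℝ) < min δ (1/4) / C := by
      apply div_pos _ hC0
      exact lt_min hδ (by norm_num)
    obtain ⟨k, hk⟩ := ((htend.eventually (eventually_lt_nhds hpos)).exists)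
    exact ⟨k, by rwa [← lt_div_iff₀' hC0]⟩
  obtain ⟨k, hk⟩ := hRk
  have hkδ : C * R ^ k < δ := lt_of_lt_of_le hk (min_le_left _ _)
  have hk4 : C * R ^ k < 1/4 := lt_of_lt_of_le hk (min_le_right _ _)
  -- diameter shrink for descendant cells
  have hshrink : ∀ n : ℕ, ∀ E ∈ CS.cells n, ∀ F ∈ CS.cells (n + k), (E ∩ F).Nonempty →
      sdiam d F ≤ C * R ^ k * sdiam d E := by
    intro n E hE F hF hne
    have h := (hdecay n (n + k) (Nat.le_add_right n k) E hE F hF hne).2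
    rw [Nat.add_sub_cancel_left] at h
    have hpos := (hcells n E hE).1
    rw [div_le_iff₀ hpos] at h
    exact h
  refine ⟨k, ?_, ?_⟩
  · -- condition (1)
    intro n E hE
    have hpos := (hcells n E hE).1
    have hbdd := (hcells n E hE).2
    obtain ⟨z, ⟨x, hx, y, hy, rfl⟩, hz⟩ :=
      exists_lt_of_lt_csSup (s := Set.image2 d E E)
        (by obtain ⟨x, hx⟩ := CS.cell_nonempty hE; exact ⟨d x x, x, hx, x, hx, rfl⟩)
        (show sdiam d E / 2 < sdiam d E by linarith)
    obtain ⟨F₁, hF₁, hxF₁, hF₁E⟩ := CS.exists_descendant k hE hx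
    obtain ⟨F₂, hF₂, hyF₂, hF₂E⟩ := CS.exists_descendant k hE hy
    have hkey : ∀ z, z ∈ F₁ → z ∈ F₂ → False := by
      intro w hw1 hw2
      have h1 : d x w ≤ sdiam d F₁ := le_csSup (hcells _ _ hF₁).2 ⟨x, hxF₁, w, hw1, rfl⟩
      have h2 : d w y ≤ sdiam d F₂ := le_csSup (hcells _ _ hF₂).2 ⟨w, hw2, y, hyF₂, rfl⟩
      have h3 : sdiam d F₁ ≤ C * R ^ k * sdiam d E :=
        hshrink n E hE F₁ hF₁ ⟨x, hF₁E hxF₁, hxF₁⟩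
      have h4 : sdiam d F₂ ≤ C * R ^ k * sdiam d E :=
        hshrink n E hE F₂ hF₂ ⟨y, hF₂E hyF₂, hyF₂⟩
      have h5 : d x y ≤ d x w + d w y := hdtri x w y
      nlinarith [hz, hk4, hpos]
    have hdisj : Disjoint F₁ F₂ := by
      rw [Set.disjoint_left]
      intro w hw1 hw2
      exact hkey w hw1 hw2
    have hne' : F₁ ≠ F₂ := by
      intro hc
      exact hkey x hxF₁ (hc ▸ hxF₁)
    exact ⟨F₁, hF₁, F₂, hF₂, hF₁E, hF₂E, hne', hdisj⟩
  · -- condition (2)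
    intro n E₁ hE₁ E₂ hE₂ hdisj F hF
    rintro ⟨⟨x, hx1, hxF⟩, ⟨y, hy2, hyF⟩⟩
    have h1 : sdist d E₁ E₂ ≤ d x y := by
      apply csInf_le
      · exact ⟨0, by rintro z ⟨u, _, v, _, rfl⟩; exact hd0 u v⟩
      · exact ⟨x, hx1, y, hy2, rfl⟩
    have h2 : d x y ≤ sdiam d F := le_csSup (hcells _ _ hF).2 ⟨x, hxF, y, hyF, rfl⟩
    have h3 : sdiam d F ≤ C * R ^ k * sdiam d E₁ :=
      hshrink n E₁ hE₁ F hF ⟨x, hx1, hxF⟩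
    have h4 := hsep n E₁ hE₁ E₂ hE₂ hdisj
    have hpos := (hcells n E₁ hE₁).1
    nlinarith [hkδ]

/-- A finitely ramified fractal `X` admits an undistorted metric
(on its underlying set) if and only if there is `k ∈ ℕ` such that every `n`-cell
contains two disjoint `(n+k)`-cells and no two disjoint `n`-cells meet a common
`(n+k)`-cell. -/
theorem stmt5 {X : Type*} [TopologicalSpace X] [CompactSpace X] [ConnectedSpace X]
    [TopologicalSpace.MetrizableSpace X] (CS : CellStructure X) :
    (∃ d : X → X → ℝ, IsMetricOn d ∧ IsUndistorted CS.cells d) ↔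
      ∃ k : ℕ,
        (∀ n : ℕ, ∀ E ∈ CS.cells n, ∃ E₁ ∈ CS.cells (n + k), ∃ E₂ ∈ CS.cells (n + k),
          E₁ ⊆ E ∧ E₂ ⊆ E ∧ E₁ ≠ E₂ ∧ Disjoint E₁ E₂) ∧
        (∀ n : ℕ, ∀ E₁ ∈ CS.cells n, ∀ E₂ ∈ CS.cells n, Disjoint E₁ E₂ →
          ∀ F ∈ CS.cells (n + k), ¬((E₁ ∩ F).Nonempty ∧ (E₂ ∩ F).Nonempty)) := by
  constructor
  · rintro ⟨d, hmet, r, R, C, δ, hund⟩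
    exact forward_main CS d hmet hund
  · rintro ⟨k, h1, h2⟩
    have h1' : Cond1 CS (k + 1) := cond1_succ h1
    have h2' : Cond2 CS (k + 1) := cond2_succ h2
    exact backward_main CS (k + 1) (by omega) h1' h2'
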